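/- Let G = (V,E) be a finite simple undirected graph with |V| = n ≥ 2, let B = ⌈2·log₂ n⌉ - 1, and let l : E → M be an injective labeling of the edges into an additive commutative group M of exponent 2 (e.g., B-bit strings under XOR). Let c(i,e), for i ∈ {1,…,B} and e ∈ E, be mutually independent Bernoulli random variables with Pr[c(i,e) = 1] = 2^{-i}. For S ⊆ V and i ∈ {1,…,B}, define H_{c,i}(S) = Σ_{v ∈ S} Σ_{e ∈ δ(v), c(i,e) = 1} l(e). If the set of edges with exactly one endpoint in S is nonempty, then with probability at least 1/9 there exists an index i ∈ {1,…,B} and an edge e with exactly one endpoint in S such that H_{c,i}(S) = l(e). -/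

import Mathlib

open scoped ENNReal

lemma aux_quarter (m : ℕ) (hm : 1 ≤ m) :
    (1/4 : ℝ) ≤ (1 - ((2:ℝ)^m)⁻¹) ^ (2^m : ℕ) := by
  induction m with
  | zero => omega
  | succ m ih =>
    rcases Nat.eq_zero_or_pos m with hm0 | hm1
    · subst hm0; norm_num
    · have h := ih hm1
      set y : ℝ := ((2:ℝ)^(m+1))⁻¹ with hy
      have hy2 : 2 * y = ((2:ℝ)^m)⁻¹ := by
        rw [hy, pow_succ]
        field_simp
      have hsq : (1 - ((2:ℝ)^m)⁻¹) ≤ (1 - y)^2 := by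
        have hy0 : 0 ≤ y := by positivity
        nlinarith [sq_nonneg y, hy2]
      have h0 : (0:ℝ) ≤ 1 - ((2:ℝ)^m)⁻¹ := by
        have : ((2:ℝ)^m)⁻¹ ≤ 1 := by
          rw [inv_le_one_iff₀]; right; exact one_le_pow₀ (by norm_num)
        linarith
      calc (1/4 : ℝ) ≤ (1 - ((2:ℝ)^m)⁻¹) ^ (2^m : ℕ) := h
        _ ≤ ((1 - y)^2) ^ (2^m : ℕ) := pow_le_pow_left₀ h0 hsq _
        _ = (1 - y) ^ (2^(m+1) : ℕ) := by rw [← pow_mul, pow_succ, mul_comm]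

lemma aux_main (k i : ℕ) (hk : 1 ≤ k) (hki : k ≤ 2^i) (hik : 2^i ≤ 2*k) (hi : 1 ≤ i) :
    (1/9 : ℝ) ≤ (k : ℝ) * (((2:ℝ)^i)⁻¹ * (1 - ((2:ℝ)^i)⁻¹)^(k-1)) := by
  set p : ℝ := ((2:ℝ)^i)⁻¹ with hp
  have hp0 : 0 < p := by positivity
  have hp1 : p ≤ 1 := by
    rw [hp, inv_le_one_iff₀]; right; exact one_le_pow₀ (by norm_num)
  have h1 : (1/2 : ℝ) ≤ (k:ℝ) * p := by
    have h2k : ((2:ℝ)^i) ≤ 2 * (k:ℝ) := by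
      exact_mod_cast Nat.cast_le.mpr hik
    rw [hp, div_le_iff₀ (by norm_num : (0:ℝ) < 2), mul_comm ((k:ℝ)) _, ← div_eq_inv_mul,
      div_mul_eq_mul_div, le_div_iff₀ (by positivity)]
    linarith
  have h2 : (1/4 : ℝ) ≤ (1 - p)^(k-1) := by
    have := aux_quarter i hi
    have hle : (1 - p) ^ (2^i : ℕ) ≤ (1-p)^(k-1) :=
      pow_le_pow_of_le_one (by linarith) (by linarith) (by omega)
    linarith
  nlinarith [h1, h2]

open Finset in
lemma aux_cut {V : Type*} [Fintype V] [DecidableEq V] (G : SimpleGraph V) [DecidableRel G.Adj]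
    {M : Type*} [AddCommGroup M] (hM : ∀ x : M, x + x = 0)
    (l : Sym2 V → M) (S : Finset V) (f : Sym2 V → Bool)
    [DecidablePred (fun e : Sym2 V => ∃ u v : V, e = s(u, v) ∧ u ∈ S ∧ v ∉ S)] :
    ∑ v ∈ S, ∑ e' ∈ (G.incidenceFinset v).filter (fun e' => f e' = true), l e'
      = ∑ e' ∈ (G.edgeFinset.filter
          (fun e : Sym2 V => ∃ u v : V, e = s(u, v) ∧ u ∈ S ∧ v ∉ S)).filter
          (fun e => f e = true), l e' := by
  classical
  set T : Finset (Sym2 V) := G.edgeFinset.filter (fun e => f e = true) with hT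
  have step1 : ∀ v : V, (G.incidenceFinset v).filter (fun e' => f e' = true)
      = T.filter (fun e => v ∈ e) := by
    intro v
    ext e
    simp [hT, SimpleGraph.mem_incidenceFinset, SimpleGraph.incidenceSet, Finset.mem_filter,
      SimpleGraph.mem_edgeFinset]
    tauto
  have step2 : ∑ v ∈ S, ∑ e' ∈ (G.incidenceFinset v).filter (fun e' => f e' = true), l e'
      = ∑ e' ∈ T, ((S.filter (fun x => x ∈ e')).card) • l e' := by
    simp_rw [step1, Finset.sum_filter]
    rw [Finset.sum_comm]
    congr 1
    ext e'
    rw [← Finset.sum_filter, Finset.sum_const]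
  rw [step2]
  have step3 : ∀ e' ∈ T, ((S.filter (fun x => x ∈ e')).card) • l e'
      = if (∃ u v : V, e' = s(u, v) ∧ u ∈ S ∧ v ∉ S) then l e' else 0 := by
    intro e' he'
    have he'E : e' ∈ G.edgeSet := by
      rw [hT, Finset.mem_filter, SimpleGraph.mem_edgeFinset] at he'
      exact he'.1
    obtain ⟨u, v⟩ := e'
    have hadj : G.Adj u v := he'E
    have hne : u ≠ v := hadj.ne
    have hfil : S.filter (fun x => x ∈ s(u,v)) =
        (if u ∈ S then {u} else ∅) ∪ (if v ∈ S then {v} else ∅) := by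
      simp_rw [Sym2.mem_iff]
      rw [Finset.filter_or, Finset.filter_eq', Finset.filter_eq']
    rw [hfil]
    by_cases hu : u ∈ S <;> by_cases hv : v ∈ S <;>
      simp only [hu, hv, if_true, if_false, Finset.union_empty, Finset.empty_union,
        Finset.card_singleton, Finset.card_empty, one_smul, zero_smul]
    · -- both in S : card = 2, smul = 0; and no cut representation
      have hcard : ({u} ∪ {v} : Finset V).card = 2 := by
        have : ({u} ∪ {v} : Finset V) = {u, v} := rfl
        rw [this, Finset.card_insert_of_notMem (by simpa using hne), Finset.card_singleton]
      rw [hcard, two_smul, hM]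
      have : ¬ (∃ a b : V, s(u,v) = s(a, b) ∧ a ∈ S ∧ b ∉ S) := by
        rintro ⟨a, b, hab, ha, hb⟩
        rw [Sym2.eq_iff] at hab
        rcases hab with ⟨h1, h2⟩ | ⟨h1, h2⟩
        · exact hb (h2 ▸ hv)
        · exact hb (h1 ▸ hu)
      rw [if_neg this]
    · have : (∃ a b : V, s(u,v) = s(a, b) ∧ a ∈ S ∧ b ∉ S) := ⟨u, v, rfl, hu, hv⟩
      rw [if_pos this]
    · have : (∃ a b : V, s(u,v) = s(a, b) ∧ a ∈ S ∧ b ∉ S) :=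
        ⟨v, u, Sym2.eq_swap, hv, hu⟩
      rw [if_pos this]
    · have : ¬ (∃ a b : V, s(u,v) = s(a, b) ∧ a ∈ S ∧ b ∉ S) := by
        rintro ⟨a, b, hab, ha, hb⟩
        rw [Sym2.eq_iff] at hab
        rcases hab with ⟨h1, h2⟩ | ⟨h1, h2⟩
        · exact hu (h1 ▸ ha)
        · exact hv (h2 ▸ ha)
      rw [if_neg this]
  rw [Finset.sum_congr rfl step3, ← Finset.sum_filter, hT, Finset.filter_comm]

lemma aux_ennreal (k i : ℕ) (hk1 : 1 ≤ k) (hkN : k ≤ 2^i) (hN2k : 2^i ≤ 2*k) (hi1 : 1 ≤ i) :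
    (1 : ℝ≥0∞) / 9 ≤ (k : ℝ≥0∞) * ((2:ℝ≥0∞)⁻¹^i * (1 - (2:ℝ≥0∞)⁻¹^i) ^ (k - 1)) := by
  have hreal := aux_main k i hk1 hkN hN2k hi1
  have hinv1 : ((2:ℝ)^i)⁻¹ ≤ 1 := by
    rw [inv_le_one_iff₀]; right; exact one_le_pow₀ (by norm_num)
  have hp' : (2:ℝ≥0∞)⁻¹^i = ENNReal.ofReal (((2:ℝ)^i)⁻¹) := by
    rw [ENNReal.ofReal_inv_of_pos (by positivity), ENNReal.ofReal_pow (by norm_num),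
      ENNReal.ofReal_ofNat, ← ENNReal.inv_pow]
  have hq' : 1 - (2:ℝ≥0∞)⁻¹^i = ENNReal.ofReal (1 - ((2:ℝ)^i)⁻¹) := by
    rw [ENNReal.ofReal_sub _ (by positivity), ENNReal.ofReal_one, hp']
  have hk' : (k : ℝ≥0∞) = ENNReal.ofReal (k : ℝ) := by
    rw [ENNReal.ofReal_natCast]
  rw [hq', hp', hk', ← ENNReal.ofReal_pow (by linarith), ← ENNReal.ofReal_mul (by positivity),
    ← ENNReal.ofReal_mul (by positivity)]
  have h19 : (1 : ℝ≥0∞) / 9 = ENNReal.ofReal (1/9 : ℝ) := by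
    rw [ENNReal.ofReal_div_of_pos (by norm_num), ENNReal.ofReal_one]
    norm_num
  rw [h19]
  exact ENNReal.ofReal_le_ofReal hreal

open Finset MeasureTheory ProbabilityTheory in
/-- Let `G` be a finite simple graph on `n ≥ 2` vertices,
`B = ⌈2 log₂ n⌉ - 1`, `l : E → M` an injective labeling of the edges into an additive
commutative group of exponent 2, and let `c(i,e)` (`1 ≤ i ≤ B`, `e ∈ E`) be mutually
independent Bernoulli random variables with `Pr[c(i,e) = 1] = 2⁻ⁱ`. Set
`H_{c,i}(S) = ∑_{v ∈ S} ∑_{e ∈ δ(v), c(i,e)=1} l(e)`. If some edge has exactly one endpoint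
in `S`, then with probability at least `1/9` there are `i ∈ {1,…,B}` and an edge `e` with
exactly one endpoint in `S` such that `H_{c,i}(S) = l(e)`. -/
theorem stmt_10 {V : Type*} [Fintype V] [DecidableEq V] (G : SimpleGraph V)
    [DecidableRel G.Adj]
    (n : ℕ) (hn : n = Fintype.card V) (hn2 : 2 ≤ n)
    (B : ℕ) (hB : B = ⌈2 * Real.logb 2 n⌉₊ - 1)
    {M : Type*} [AddCommGroup M] (hM : ∀ x : M, x + x = 0)
    (l : Sym2 V → M) (hl : Set.InjOn l G.edgeSet)
    {Ω : Type*} [MeasurableSpace Ω] (μ : MeasureTheory.Measure Ω)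
    [MeasureTheory.IsProbabilityMeasure μ]
    (c : ℕ → Sym2 V → Ω → Bool)
    (hmeas : ∀ i e, Measurable (c i e))
    (hindep : ProbabilityTheory.iIndepFun
      (m := fun _ : {q : ℕ × Sym2 V // q.1 ∈ Finset.Icc 1 B ∧ q.2 ∈ G.edgeSet} =>
        (inferInstance : MeasurableSpace Bool))
      (fun q ω => c q.1.1 q.1.2 ω) μ)
    (hmarg : ∀ i ∈ Finset.Icc 1 B, ∀ e ∈ G.edgeSet,
      μ {ω | c i e ω = true} = (2 : ℝ≥0∞)⁻¹ ^ i)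
    (S : Finset V)
    (hcutne : ∃ e ∈ G.edgeSet, ∃ u v : V, e = s(u, v) ∧ u ∈ S ∧ v ∉ S) :
    (1 : ℝ≥0∞) / 9 ≤
      μ {ω | ∃ i ∈ Finset.Icc 1 B, ∃ e ∈ G.edgeSet,
        (∃ u v : V, e = s(u, v) ∧ u ∈ S ∧ v ∉ S) ∧
        (∑ v ∈ S, ∑ e' ∈ (G.incidenceFinset v).filter (fun e' => c i e' ω = true), l e')
          = l e} := by
  classical
  obtain ⟨e₀, he₀E, hcut₀⟩ := hcutne
  set C : Finset (Sym2 V) :=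
    G.edgeFinset.filter (fun e : Sym2 V => ∃ u v : V, e = s(u, v) ∧ u ∈ S ∧ v ∉ S) with hC
  have hCE : ∀ e ∈ C, e ∈ G.edgeSet := by
    intro e he
    rw [hC, Finset.mem_filter, SimpleGraph.mem_edgeFinset] at he
    exact he.1
  have he₀C : e₀ ∈ C :=
    Finset.mem_filter.mpr ⟨SimpleGraph.mem_edgeFinset.mpr he₀E, hcut₀⟩
  set k := C.card with hk
  have hk1 : 1 ≤ k := Finset.card_pos.mpr ⟨e₀, he₀C⟩
  set i := max 1 (Nat.clog 2 k) with hidef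
  have hi1 : 1 ≤ i := le_max_left _ _
  have hkN : k ≤ 2 ^ i :=
    le_trans (Nat.le_pow_clog one_lt_two k)
      (Nat.pow_le_pow_right (by norm_num) (le_max_right _ _))
  have hN2k : 2 ^ i ≤ 2 * k := by
    rcases eq_or_lt_of_le hk1 with h1 | h1
    · rw [hidef, ← h1]
      norm_num [Nat.clog_one_right]
    · have hclog : 1 ≤ Nat.clog 2 k := Nat.clog_pos one_lt_two h1
      have hieq : i = Nat.clog 2 k := max_eq_right hclog
      have hlt := Nat.pow_pred_clog_lt_self one_lt_two h1
      rw [Nat.pred_eq_sub_one] at hlt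
      have hpow : 2 ^ i = 2 * 2 ^ (Nat.clog 2 k - 1) := by
        rw [hieq, ← pow_succ']
        congr 1
        omega
      omega
  -- i ≤ B
  have hchoose : k ≤ n.choose 2 := by
    rw [hn]
    exact le_trans (Finset.card_le_card (Finset.filter_subset _ _))
      G.card_edgeFinset_le_card_choose_two
  have h2k : 2 * k ≤ n * (n - 1) := by
    have h1 : 2 * (n.choose 2) ≤ n * (n - 1) := by
      rw [Nat.choose_two_right, mul_comm]
      exact Nat.div_mul_le_self _ _
    omega
  have hceil2 : 2 ≤ ⌈2 * Real.logb 2 n⌉₊ := by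
    have hlog1 : (1:ℝ) ≤ Real.logb 2 n := by
      rw [show (1:ℝ) = Real.logb 2 2 by simp]
      exact Real.logb_le_logb_of_le (by norm_num) (by norm_num) (by exact_mod_cast hn2)
    calc (2:ℕ) = ⌈(2:ℝ)⌉₊ := by simp
      _ ≤ ⌈2 * Real.logb 2 n⌉₊ := Nat.ceil_le_ceil (by linarith)
  have hB1 : B + 1 = ⌈2 * Real.logb 2 n⌉₊ := by omega
  have hn2B : n ^ 2 ≤ 2 ^ (B + 1) := by
    have hnpos : (0:ℝ) < n := by positivity
    have hr : ((n:ℝ)) ^ (2:ℕ) ≤ (2:ℝ) ^ ((B + 1 : ℕ) : ℝ) := by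
      have h1 : ((n:ℝ)) ^ (2:ℕ) = (2:ℝ) ^ (2 * Real.logb 2 n) := by
        rw [mul_comm (2:ℝ), Real.rpow_mul (by norm_num), Real.rpow_logb (by norm_num)
          (by norm_num) hnpos, ← Real.rpow_natCast (n:ℝ) 2]
        norm_num
      rw [h1]
      apply Real.rpow_le_rpow_of_exponent_le one_le_two
      rw [hB1]
      exact_mod_cast Nat.le_ceil _
    rw [Real.rpow_natCast] at hr
    exact_mod_cast hr
  have hiB : i ≤ B := by
    have hlt : 2 ^ i < 2 ^ (B + 1) := by
      have hsq : n ^ 2 = n * n := sq n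
      have hnn : n * (n - 1) < n * n := by
        obtain ⟨m, rfl⟩ : ∃ m, n = m + 1 := ⟨n - 1, by omega⟩
        simp only [Nat.add_sub_cancel]
        nlinarith
      omega
    have := (Nat.pow_lt_pow_iff_right (a := 2) (by norm_num)).mp hlt
    omega
  have hiIcc : i ∈ Finset.Icc 1 B := Finset.mem_Icc.mpr ⟨hi1, hiB⟩
  set p : ℝ≥0∞ := (2 : ℝ≥0∞)⁻¹ ^ i with hp
  have prtrue : ∀ e ∈ C, μ (c i e ⁻¹' {true}) = p := by
    intro e he
    have : c i e ⁻¹' {true} = {ω | c i e ω = true} := by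
      ext ω; simp
    rw [this]
    exact hmarg i hiIcc e (hCE e he)
  have prfalse : ∀ e ∈ C, μ (c i e ⁻¹' {false}) = 1 - p := by
    intro e he
    have hcompl : c i e ⁻¹' {false} = (c i e ⁻¹' {true})ᶜ := by
      ext ω
      cases h : c i e ω <;> simp [h]
    rw [hcompl, prob_compl_eq_one_sub ((hmeas i e) (measurableSet_singleton true)),
      prtrue e he]
  -- the events
  set A : Sym2 V → Set Ω := fun e₁ =>
    ⋂ e ∈ C, c i e ⁻¹' (if e = e₁ then ({true} : Set Bool) else {false}) with hA
  have hAmeas : ∀ e₁, MeasurableSet (A e₁) := by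
    intro e₁
    apply MeasurableSet.biInter C.countable_toSet
    intro e _
    apply (hmeas i e)
    split <;> exact measurableSet_singleton _
  have hAmem : ∀ e₁, ∀ ω, ω ∈ A e₁ ↔ ∀ e ∈ C, c i e ω = (if e = e₁ then true else false) := by
    intro e₁ ω
    rw [hA]
    simp only [Set.mem_iInter, Set.mem_preimage]
    constructor
    · intro h e he
      have h' := h e he
      by_cases hcase : e = e₁
      · rw [if_pos hcase] at h' ⊢; exact h'
      · rw [if_neg hcase] at h' ⊢; exact h'
    · intro h e he
      have h' := h e he
      by_cases hcase : e = e₁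
      · rw [if_pos hcase] at h' ⊢; exact h'
      · rw [if_neg hcase] at h' ⊢; exact h'
  have hμA : ∀ e₁ ∈ C, μ (A e₁) = p * (1 - p) ^ (k - 1) := by
    intro e₁ he₁
    set sets : {q : ℕ × Sym2 V // q.1 ∈ Finset.Icc 1 B ∧ q.2 ∈ G.edgeSet} → Set Bool :=
      fun q => if q.1.2 = e₁ then ({true} : Set Bool) else {false} with hsets
    set T : Finset {q : ℕ × Sym2 V // q.1 ∈ Finset.Icc 1 B ∧ q.2 ∈ G.edgeSet} :=
      C.attach.image (fun e => ⟨(i, e.1), ⟨hiIcc, hCE e.1 e.2⟩⟩) with hTdef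
    have hindepT := hindep.measure_inter_preimage_eq_mul T (sets := sets)
      (fun q _ => by rw [hsets]; dsimp only; split <;> exact measurableSet_singleton _)
    have hmemT : ∀ e, ∀ he : e ∈ C, (⟨(i, e), ⟨hiIcc, hCE e he⟩⟩ :
        {q : ℕ × Sym2 V // q.1 ∈ Finset.Icc 1 B ∧ q.2 ∈ G.edgeSet}) ∈ T := by
      intro e he
      rw [hTdef, Finset.mem_image]
      exact ⟨⟨e, he⟩, Finset.mem_attach _ _, rfl⟩
    have hinter : (⋂ q ∈ T, (fun ω => c q.1.1 q.1.2 ω) ⁻¹' sets q) = A e₁ := by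
      apply Set.eq_of_subset_of_subset
      · intro ω hω
        show ω ∈ ⋂ e ∈ C, c i e ⁻¹' (if e = e₁ then ({true} : Set Bool) else {false})
        apply Set.mem_iInter₂.mpr
        intro e he
        exact Set.mem_iInter₂.mp hω _ (hmemT e he)
      · intro ω hω
        apply Set.mem_iInter₂.mpr
        intro q hq
        rw [hTdef, Finset.mem_image] at hq
        obtain ⟨a, -, rfl⟩ := hq
        exact Set.mem_iInter₂.mp hω a.1 a.2
    have hprod : ∏ q ∈ T, μ ((fun ω => c q.1.1 q.1.2 ω) ⁻¹' sets q)
        = ∏ e ∈ C, μ (c i e ⁻¹' (if e = e₁ then ({true} : Set Bool) else {false})) := by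
      rw [hTdef, Finset.prod_image]
      · rw [← Finset.prod_attach C
          (fun e => μ (c i e ⁻¹' (if e = e₁ then ({true} : Set Bool) else {false})))]
      · intro a _ b _ hab
        have : a.1 = b.1 := congrArg (fun q => q.1.2) hab
        exact Subtype.ext this
    rw [hinter] at hindepT
    rw [hindepT, hprod, ← Finset.mul_prod_erase C _ he₁, if_pos rfl, prtrue e₁ he₁]
    congr 1
    rw [Finset.prod_congr rfl (fun e he => ?_), Finset.prod_const,
      Finset.card_erase_of_mem he₁]
    rw [if_neg (Finset.ne_of_mem_erase he), prfalse e (Finset.mem_of_mem_erase he)]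
  have hAdisj : (C : Set (Sym2 V)).PairwiseDisjoint A := by
    intro e₁ he₁ e₂ he₂ hne
    apply Set.disjoint_left.mpr
    intro ω h1 h2
    have hv1 := (hAmem e₁ ω).mp h1 e₁ (by exact_mod_cast he₁)
    have hv2 := (hAmem e₂ ω).mp h2 e₁ (by exact_mod_cast he₁)
    rw [if_pos rfl] at hv1
    rw [if_neg hne] at hv2
    rw [hv1] at hv2
    exact Bool.noConfusion hv2
  have hsum : μ (⋃ e₁ ∈ C, A e₁) = (k : ℝ≥0∞) * (p * (1 - p) ^ (k - 1)) := by
    rw [measure_biUnion_finset hAdisj (fun e _ => hAmeas e),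
      Finset.sum_congr rfl hμA, Finset.sum_const, nsmul_eq_mul]
  have hsubset : (⋃ e₁ ∈ C, A e₁) ⊆ {ω | ∃ i ∈ Finset.Icc 1 B, ∃ e ∈ G.edgeSet,
        (∃ u v : V, e = s(u, v) ∧ u ∈ S ∧ v ∉ S) ∧
        (∑ v ∈ S, ∑ e' ∈ (G.incidenceFinset v).filter (fun e' => c i e' ω = true), l e')
          = l e} := by
    intro ω hω
    simp only [Set.mem_iUnion] at hω
    obtain ⟨e₁, he₁C, hωA⟩ := hω
    have hcut₁ := (Finset.mem_filter.mp he₁C).2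
    refine ⟨i, hiIcc, e₁, hCE e₁ he₁C, hcut₁, ?_⟩
    rw [aux_cut G hM l S (fun e => c i e ω)]
    have hfil : (G.edgeFinset.filter
          (fun e : Sym2 V => ∃ u v : V, e = s(u, v) ∧ u ∈ S ∧ v ∉ S)).filter
          (fun e => c i e ω = true) = {e₁} := by
      ext e
      simp only [Finset.mem_filter, Finset.mem_singleton]
      constructor
      · rintro ⟨⟨heE, hecut⟩, hec⟩
        have heC : e ∈ C := Finset.mem_filter.mpr ⟨heE, hecut⟩
        have := (hAmem e₁ ω).mp hωA e heC
        by_contra hne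
        rw [if_neg hne] at this
        rw [hec] at this
        exact Bool.noConfusion this
      · rintro rfl
        have := (hAmem e ω).mp hωA e he₁C
        rw [if_pos rfl] at this
        exact ⟨Finset.mem_filter.mp he₁C, this⟩
    rw [hfil, Finset.sum_singleton]
  -- arithmetic
  have harith := aux_ennreal k i hk1 hkN hN2k hi1
  calc (1 : ℝ≥0∞) / 9 ≤ (k : ℝ≥0∞) * (p * (1 - p) ^ (k - 1)) := harith
    _ = μ (⋃ e₁ ∈ C, A e₁) := hsum.symm
    _ ≤ _ := measure_mono hsubset
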